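/- Let n > 1 and r ≥ 2. Then the number of x with 1 ≤ x ≤ n satisfying x^r ≡ x (mod n) equals ∏_{i=1}^m (1 + gcd(r − 1, φ(p_i^{a_i}))), where n = ∏_{i=1}^m p_i^{a_i} is the canonical factorization of n and n is squarefree. -/

import Mathlib

open Polynomial

-- Count solutions of x^r = x in ZMod p for p prime.
lemma count_prime (p r : ℕ) (hp : p.Prime) (hr : 2 ≤ r) :
    Nat.card {z : ZMod p // z ^ r = z} = 1 + Nat.gcd (r - 1) (p - 1) := by
  haveI : Fact p.Prime := ⟨hp⟩
  set d := r - 1 with hd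
  have hd0 : 0 < d := by omega
  set g := Nat.gcd d (p - 1) with hg
  have hp1 : 0 < p - 1 := by have := hp.two_le; omega
  have hg0 : 0 < g := Nat.gcd_pos_of_pos_left _ hd0
  have hgdvd : g ∣ p - 1 := Nat.gcd_dvd_right _ _
  have hgd : g ∣ d := Nat.gcd_dvd_left _ _
  -- primitive g-th root of unity exists
  obtain ⟨u, hu⟩ := IsCyclic.exists_generator (α := (ZMod p)ˣ)
  have hord : orderOf (u : ZMod p) = p - 1 := by
    rw [orderOf_units, orderOf_eq_card_of_forall_mem_zpowers hu, Nat.card_eq_fintype_card,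
      ZMod.card_units_eq_totient, Nat.totient_prime hp]
  have hprim : IsPrimitiveRoot (u : ZMod p) (p - 1) := hord ▸ IsPrimitiveRoot.orderOf _
  have hprodg : p - 1 = ((p - 1) / g) * g := (Nat.div_mul_cancel hgdvd).symm
  have hprimg : IsPrimitiveRoot ((u : ZMod p) ^ ((p - 1) / g)) g := hprim.pow hp1 hprodg
  -- the two nth-roots finsets agree
  have hsets : nthRootsFinset d (1 : ZMod p) = nthRootsFinset g (1 : ZMod p) := by
    ext x
    rw [mem_nthRootsFinset hd0, mem_nthRootsFinset hg0]
    constructor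
    · intro hx
      have hx0 : x ≠ 0 := by
        intro h; rw [h, zero_pow hd0.ne'] at hx; exact one_ne_zero hx.symm
      have h1 : orderOf x ∣ d := orderOf_dvd_of_pow_eq_one hx
      have h2 : orderOf x ∣ p - 1 :=
        orderOf_dvd_of_pow_eq_one (ZMod.pow_card_sub_one_eq_one hx0)
      have : orderOf x ∣ g := Nat.dvd_gcd h1 h2
      exact orderOf_dvd_iff_pow_eq_one.mp this
    · intro hx
      obtain ⟨c, hc⟩ := hgd
      rw [hc, pow_mul, hx, one_pow]
  have hcardg : (nthRootsFinset g (1 : ZMod p)).card = g := hprimg.card_nthRootsFinset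
  classical
  have : Nat.card {z : ZMod p // z ^ r = z} =
      (Finset.univ.filter fun z : ZMod p => z ^ r = z).card := by
    rw [Nat.card_eq_fintype_card, Fintype.card_subtype]
  rw [this]
  have hfilter : (Finset.univ.filter fun z : ZMod p => z ^ r = z)
      = insert (0 : ZMod p) (nthRootsFinset d (1 : ZMod p)) := by
    ext x
    simp only [Finset.mem_filter, Finset.mem_univ, true_and, Finset.mem_insert,
      mem_nthRootsFinset hd0]
    constructor
    · intro hx
      by_cases hx0 : x = 0
      · exact Or.inl hx0
      · right
        have hre : x ^ r = x ^ d * x := by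
          rw [← pow_succ]; congr 1; omega
        rw [hre] at hx
        have := mul_right_cancel₀ hx0 (hx.trans (one_mul x).symm)
        exact this
    · rintro (rfl | hx)
      · rw [zero_pow (by omega)]
      · have hre : x ^ r = x ^ d * x := by
          rw [← pow_succ]; congr 1; omega
        rw [hre, hx, one_mul]
  have h0 : (0 : ZMod p) ∉ nthRootsFinset d (1 : ZMod p) := by
    intro h0
    rw [mem_nthRootsFinset hd0, zero_pow hd0.ne'] at h0
    exact one_ne_zero h0.symm
  rw [hfilter, Finset.card_insert_of_notMem h0, hsets, hcardg, Nat.add_comm]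

theorem stmt12 (n r : ℕ) (hn : 1 < n) (hr : 2 ≤ r) (hsf : Squarefree n) :
    Nat.card {x : ℕ // 1 ≤ x ∧ x ≤ n ∧ x ^ r ≡ x [MOD n]} =
      ∏ p ∈ n.factorization.support,
        (1 + Nat.gcd (r - 1) (Nat.totient (p ^ n.factorization p))) := by
  haveI : NeZero n := ⟨by omega⟩
  -- Step A: bijection with ZMod n solutions
  have eA : {x : ℕ // 1 ≤ x ∧ x ≤ n ∧ x ^ r ≡ x [MOD n]} ≃ {y : ZMod n // y ^ r = y} := by
    refine Equiv.ofBijective (fun x => ⟨(x.1 : ZMod n), ?_⟩) ⟨?_, ?_⟩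
    · obtain ⟨x, h1, h2, h3⟩ := x
      have := (ZMod.natCast_eq_natCast_iff (x ^ r) x n).mpr h3
      simpa using this
    · rintro ⟨a, ha1, ha2, ha3⟩ ⟨b, hb1, hb2, hb3⟩ hab
      simp only [Subtype.mk.injEq] at hab ⊢
      have h := (ZMod.natCast_eq_natCast_iff a b n).mp hab
      unfold Nat.ModEq at h
      rcases Nat.lt_or_ge a n with h' | h' <;> rcases Nat.lt_or_ge b n with h'' | h''
      · rwa [Nat.mod_eq_of_lt h', Nat.mod_eq_of_lt h''] at h
      · have hb : b = n := le_antisymm hb2 h''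
        rw [Nat.mod_eq_of_lt h', hb, Nat.mod_self] at h; omega
      · have ha : a = n := le_antisymm ha2 h'
        rw [Nat.mod_eq_of_lt h'', ha, Nat.mod_self] at h; omega
      · omega
    · rintro ⟨y, hy⟩
      have hval : ((y.val : ℕ) : ZMod n) = y := by
        rw [ZMod.natCast_val, ZMod.cast_id]
      by_cases h0 : y = 0
      · refine ⟨⟨n, by omega, le_refl n, ?_⟩, ?_⟩
        · rw [← ZMod.natCast_eq_natCast_iff, Nat.cast_pow, ZMod.natCast_self,
            zero_pow (by omega : r ≠ 0)]
        · ext; simp [h0, ZMod.natCast_self]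
      · have hvpos : 0 < y.val := ZMod.val_pos.mpr h0
        refine ⟨⟨y.val, hvpos, le_of_lt (ZMod.val_lt y), ?_⟩, ?_⟩
        · rw [← ZMod.natCast_eq_natCast_iff, Nat.cast_pow, hval, hy]
        · exact Subtype.ext hval
  rw [Nat.card_congr eA]
  -- Step B: CRT
  have hι : Pairwise (Function.onFun Nat.Coprime fun p : n.primeFactors => (p : ℕ)) := by
    rintro ⟨p, hp⟩ ⟨q, hq⟩ hne
    have hpp := Nat.prime_of_mem_primeFactors hp
    have hqq := Nat.prime_of_mem_primeFactors hq
    exact (Nat.coprime_primes hpp hqq).mpr (by simpa [Subtype.ext_iff] using hne)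
  have hprod : (∏ i : n.primeFactors, (i : ℕ)) = n := by
    exact (Finset.prod_coe_sort n.primeFactors (fun p => p)).trans
      (Nat.prod_primeFactors_of_squarefree hsf)
  let e : ZMod n ≃+* ∀ i : n.primeFactors, ZMod i :=
    (ZMod.ringEquivCongr hprod.symm).trans (ZMod.prodEquivPi _ hι)
  have eB : {y : ZMod n // y ^ r = y} ≃ ∀ i : n.primeFactors, {z : ZMod i // z ^ r = z} := by
    refine (e.toEquiv.subtypeEquiv (q := fun f => f ^ r = f) fun y => ?_).trans
      ((Equiv.subtypeEquivRight
        (q := fun f => ∀ i : n.primeFactors, (f i) ^ r = f i) fun f => ?_).trans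
        (Equiv.subtypePiEquivPi (p := fun _ z => z ^ r = z)))
    · show y ^ r = y ↔ (e y) ^ r = e y
      rw [← map_pow]
      exact e.injective.eq_iff.symm
    · show f ^ r = f ↔ ∀ i : n.primeFactors, (f i) ^ r = f i
      simp [funext_iff]
  rw [Nat.card_congr eB, Nat.card_pi]
  rw [Nat.support_factorization,
    ← Finset.prod_coe_sort n.primeFactors
      (fun p => 1 + Nat.gcd (r - 1) (Nat.totient (p ^ n.factorization p)))]
  refine Finset.prod_congr rfl fun i _ => ?_
  have hpp := Nat.prime_of_mem_primeFactors i.2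
  have hfact : n.factorization i = 1 :=
    Nat.factorization_eq_one_of_squarefree hsf hpp (Nat.dvd_of_mem_primeFactors i.2)
  rw [count_prime i r hpp hr, hfact, pow_one, Nat.totient_prime hpp]
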